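/- Let λ > ℵ₁ be regular and let P_cal be the poset of Definition in context. Suppose p₀, …, p_{n-1} ∈ P_cal all have the same type over (u, F), with u_{p_i} ∩ u_{p_j} = u and F_{p_i} ∩ F_{p_j} = F for all i ≠ j. Then p₀, …, p_{n-1} have a common lower bound q in P_cal, obtained by taking unions of the u's, F's, c's and d's, assigning new unique values of d on new arguments, and setting undefined values c_q({x,y}) := 0 if x, y > max(F) and 1 otherwise. Consequently P_cal has precaliber μ for every uncountable regular cardinal μ. -/

import Mathlib

open Cardinal

def Homog (c : Ordinal → Ordinal → Option (Fin 2)) (s : Finset Ordinal) : Prop :=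
  ∀ x ∈ s, ∀ y ∈ s, x ≠ y → c x y = some 1

structure PCal (lam : Cardinal) where
  u : Finset Ordinal
  F : Finset Ordinal
  hu : ∀ x ∈ u, x < lam.ord
  hF : ∀ x ∈ F, x < lam.ord
  c : Ordinal → Ordinal → Option (Fin 2)
  d : Ordinal → Finset Ordinal → Option ℕ
  c_dom : ∀ x y, c x y ≠ none ↔ (x ∈ u ∧ y ∈ u ∧ x ≠ y)
  c_symm : ∀ x y, c x y = c y x
  d_dom : ∀ α s, d α s ≠ none ↔ (α ∈ F ∧ ∀ x ∈ s, x ∈ u ∧ x < α)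
  star : ∀ α ∈ F, ∀ s₁ s₂ : Finset Ordinal,
    (∀ x ∈ s₁, x ∈ u ∧ x < α) → (∀ x ∈ s₂, x ∈ u ∧ x < α) →
    Homog c s₁ → Homog c s₂ → d α s₁ = d α s₂ → Homog c (s₁ ∪ s₂)

def pcLe {lam : Cardinal} (q p : PCal lam) : Prop :=
  p.u ⊆ q.u ∧ p.F ⊆ q.F ∧ (∀ x y, p.c x y ≠ none → q.c x y = p.c x y) ∧
    ∀ α s, p.d α s ≠ none → q.d α s = p.d α s

/-- `p` and `q` have the same type over `(u, F)`: there is an order isomorphism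
of `u_p ∪ F_p` onto `u_q ∪ F_q` fixing `u ∪ F`, mapping `u_p` onto `u_q` and
`F_p` onto `F_q`, and commuting with the colorings `c` and `d`. -/
def SameTypeOver {lam : Cardinal} (u F : Finset Ordinal) (p q : PCal lam) : Prop :=
  u ⊆ p.u ∧ F ⊆ p.F ∧ u ⊆ q.u ∧ F ⊆ q.F ∧
  ∃ e : Ordinal → Ordinal,
    (∀ x ∈ p.u ∪ p.F, ∀ y ∈ p.u ∪ p.F, x < y → e x < e y) ∧
    p.u.image e = q.u ∧ p.F.image e = q.F ∧
    (∀ x ∈ u ∪ F, e x = x) ∧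
    (∀ x ∈ p.u, ∀ y ∈ p.u, q.c (e x) (e y) = p.c x y) ∧
    (∀ α ∈ p.F, ∀ s : Finset Ordinal, s ⊆ p.u → q.d (e α) (s.image e) = p.d α s)

noncomputable section
open Classical

namespace Stmt11

def enumL (W : Finset Ordinal) (a : ℕ) : Ordinal := (W.sort (·≤·)).getD a 0

def posOf (W : Finset Ordinal) (x : Ordinal) : ℕ := (W.sort (·≤·)).idxOf x

lemma enumL_mem {W : Finset Ordinal} {a : ℕ} (h : a < W.card) : enumL W a ∈ W := by
  have hl : a < (W.sort (·≤·)).length := by rwa [Finset.length_sort]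
  rw [enumL, List.getD_eq_get _ _ ⟨a, hl⟩]
  exact (Finset.mem_sort _).1 (List.get_mem _ _)

lemma enumL_lt {W : Finset Ordinal} {a b : ℕ} (hab : a < b) (hb : b < W.card) :
    enumL W a < enumL W b := by
  have hl : b < (W.sort (·≤·)).length := by rwa [Finset.length_sort]
  have ha : a < (W.sort (·≤·)).length := lt_trans hab hl
  rw [enumL, enumL, List.getD_eq_get _ _ ⟨b, hl⟩, List.getD_eq_get _ _ ⟨a, ha⟩]
  exact Finset.sortedLT_sort W (show (⟨a, ha⟩ : Fin _) < ⟨b, hl⟩ from hab)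

lemma enumL_injOn {W : Finset Ordinal} {a b : ℕ} (ha : a < W.card) (hb : b < W.card)
    (h : enumL W a = enumL W b) : a = b := by
  rcases lt_trichotomy a b with h' | h' | h'
  · exact absurd h (ne_of_lt (enumL_lt h' hb))
  · exact h'
  · exact absurd h.symm (ne_of_lt (enumL_lt h' ha))

lemma exists_enumL {W : Finset Ordinal} {x : Ordinal} (h : x ∈ W) :
    ∃ a, a < W.card ∧ enumL W a = x := by
  have : x ∈ W.sort (·≤·) := (Finset.mem_sort _).2 h
  obtain ⟨⟨a, ha⟩, hax⟩ := List.mem_iff_get.1 this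
  refine ⟨a, by rwa [Finset.length_sort] at ha, ?_⟩
  rw [enumL, List.getD_eq_get _ _ ⟨a, ha⟩, hax]

lemma posOf_lt {W : Finset Ordinal} {x : Ordinal} (h : x ∈ W) : posOf W x < W.card := by
  rw [posOf, ← Finset.length_sort (α := Ordinal) (·≤·) (s := W)]
  exact List.idxOf_lt_length_iff.2 ((Finset.mem_sort _).2 h)

lemma enumL_posOf {W : Finset Ordinal} {x : Ordinal} (h : x ∈ W) : enumL W (posOf W x) = x := by
  have h' : x ∈ W.sort (·≤·) := (Finset.mem_sort _).2 h
  have hl : posOf W x < (W.sort (·≤·)).length := List.idxOf_lt_length_iff.2 h'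
  rw [enumL, List.getD_eq_get _ _ ⟨_, hl⟩]
  exact List.idxOf_get hl

lemma posOf_enumL {W : Finset Ordinal} {a : ℕ} (h : a < W.card) : posOf W (enumL W a) = a :=
  enumL_injOn (posOf_lt (enumL_mem h)) h (enumL_posOf (enumL_mem h))

def posSet (W t : Finset Ordinal) : Finset ℕ :=
  (Finset.range W.card).filter (fun a => enumL W a ∈ t)

lemma mem_posSet {W t : Finset Ordinal} {a : ℕ} :
    a ∈ posSet W t ↔ a < W.card ∧ enumL W a ∈ t := by simp [posSet]

lemma posSet_image {W t : Finset Ordinal} (ht : t ⊆ W) :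
    (posSet W t).image (enumL W) = t := by
  ext x; simp only [Finset.mem_image, mem_posSet]
  constructor
  · rintro ⟨a, ⟨_, hat⟩, rfl⟩; exact hat
  · intro hx; obtain ⟨a, ha, rfl⟩ := exists_enumL (ht hx); exact ⟨a, ⟨ha, hx⟩, rfl⟩

lemma image_posOf {W t : Finset Ordinal} (ht : t ⊆ W) :
    t.image (posOf W) = posSet W t := by
  ext a; simp only [Finset.mem_image, mem_posSet]
  constructor
  · rintro ⟨x, hx, rfl⟩
    exact ⟨posOf_lt (ht hx), by rw [enumL_posOf (ht hx)]; exact hx⟩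
  · rintro ⟨ha, hat⟩; exact ⟨enumL W a, hat, posOf_enumL ha⟩

lemma enum_agree {W W' t : Finset Ordinal} (ht : t ⊆ W) (ht' : t ⊆ W')
    (hP : posSet W t = posSet W' t) {a : ℕ} (ha : a ∈ posSet W t) :
    enumL W a = enumL W' a := by
  have hinj : Set.InjOn (enumL W) ↑(posSet W t) := by
    intro x hx y hy h
    exact enumL_injOn (mem_posSet.1 hx).1 (mem_posSet.1 hy).1 h
  have hcard : (posSet W t).card = t.card := by
    conv_rhs => rw [← posSet_image ht]
    rw [Finset.card_image_of_injOn hinj]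
  set P := posSet W t with hPdef
  have hfmono : StrictMono (fun i : Fin t.card => enumL W (P.orderEmbOfFin hcard i)) := by
    intro i j hij
    have h2 : (P.orderEmbOfFin hcard j) ∈ P := Finset.orderEmbOfFin_mem _ _ _
    exact enumL_lt ((P.orderEmbOfFin hcard).strictMono hij) (mem_posSet.1 h2).1
  have hgmono : StrictMono (fun i : Fin t.card => enumL W' (P.orderEmbOfFin hcard i)) := by
    intro i j hij
    have h2 : (P.orderEmbOfFin hcard j) ∈ P := Finset.orderEmbOfFin_mem _ _ _
    have h2' : (P.orderEmbOfFin hcard j) ∈ posSet W' t := hP ▸ h2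
    exact enumL_lt ((P.orderEmbOfFin hcard).strictMono hij) (mem_posSet.1 h2').1
  have hfv : ∀ i, enumL W (P.orderEmbOfFin hcard i) ∈ t := fun i =>
    (mem_posSet.1 (Finset.orderEmbOfFin_mem _ _ _ : P.orderEmbOfFin hcard i ∈ P)).2
  have hgv : ∀ i, enumL W' (P.orderEmbOfFin hcard i) ∈ t := fun i =>
    (mem_posSet.1 (hP ▸ (Finset.orderEmbOfFin_mem _ _ _ : P.orderEmbOfFin hcard i ∈ P))).2
  have hf := Finset.orderEmbOfFin_unique' (f := OrderEmbedding.ofStrictMono _ hfmono)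
    (rfl : t.card = t.card) hfv
  have hg := Finset.orderEmbOfFin_unique' (f := OrderEmbedding.ofStrictMono _ hgmono)
    (rfl : t.card = t.card) hgv
  obtain ⟨i, hi⟩ : ∃ i, P.orderEmbOfFin hcard i = a := by
    have : (a : ℕ) ∈ (↑P : Set ℕ) := ha
    rw [← Finset.range_orderEmbOfFin P hcard] at this
    exact this
  have h1 : enumL W a = t.orderEmbOfFin rfl i := by
    rw [← hi, ← hf]; rfl
  have h2 : enumL W' a = t.orderEmbOfFin rfl i := by
    rw [← hi, ← hg]; rfl
  rw [h1, h2]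


variable {lam : Cardinal}

def Wof (p : PCal lam) : Finset Ordinal := p.u ∪ p.F

lemma u_sub_Wof (p : PCal lam) : p.u ⊆ Wof p := Finset.subset_union_left
lemma F_sub_Wof (p : PCal lam) : p.F ⊆ Wof p := Finset.subset_union_right

def TypeData := ℕ × Finset ℕ × Finset ℕ × Finset ℕ × Finset ℕ × Finset (ℕ × ℕ) ×
  Finset (ℕ × Finset ℕ × ℕ)

instance : Countable TypeData := by unfold TypeData; infer_instance

def invOf (u F : Finset Ordinal) (p : PCal lam) : TypeData :=
  ⟨(Wof p).card, posSet (Wof p) p.u, posSet (Wof p) p.F, posSet (Wof p) u, posSet (Wof p) F,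
   ((Finset.range (Wof p).card) ×ˢ (Finset.range (Wof p).card)).filter
      (fun ab => p.c (enumL (Wof p) ab.1) (enumL (Wof p) ab.2) = some 1),
   (((Finset.range (Wof p).card) ×ˢ (Finset.range (Wof p).card).powerset).filter
      (fun aS => p.d (enumL (Wof p) aS.1) (aS.2.image (enumL (Wof p))) ≠ none)).image
      (fun aS => (aS.1, aS.2, (p.d (enumL (Wof p) aS.1) (aS.2.image (enumL (Wof p)))).getD 0))⟩

lemma opt2cases (o : Option (Fin 2)) : o = none ∨ o = some 0 ∨ o = some 1 := by
  rcases o with _ | v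
  · exact Or.inl rfl
  · right; revert v; decide

lemma some_getD {β : Type*} {o : Option β} (h : o ≠ none) (d : β) : o = some (o.getD d) := by
  rcases o with _ | v
  · exact absurd rfl h
  · rfl

lemma sameType_of_inv {u F : Finset Ordinal} {p q : PCal lam}
    (hup : u ⊆ p.u) (hFp : F ⊆ p.F) (huq : u ⊆ q.u) (hFq : F ⊆ q.F)
    (h : invOf u F p = invOf u F q) : SameTypeOver u F p q := by
  have hk : (Wof p).card = (Wof q).card := congrArg (fun t : TypeData => t.1) h
  have hA1 : posSet (Wof p) p.u = posSet (Wof q) q.u := congrArg (fun t : TypeData => t.2.1) h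
  have hA2 : posSet (Wof p) p.F = posSet (Wof q) q.F := congrArg (fun t : TypeData => t.2.2.1) h
  have hA3 : posSet (Wof p) u = posSet (Wof q) u := congrArg (fun t : TypeData => t.2.2.2.1) h
  have hA4 : posSet (Wof p) F = posSet (Wof q) F := congrArg (fun t : TypeData => t.2.2.2.2.1) h
  have hC : ((Finset.range (Wof p).card) ×ˢ (Finset.range (Wof p).card)).filter
        (fun ab : ℕ × ℕ => p.c (enumL (Wof p) ab.1) (enumL (Wof p) ab.2) = some 1) =
      ((Finset.range (Wof q).card) ×ˢ (Finset.range (Wof q).card)).filter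
        (fun ab : ℕ × ℕ => q.c (enumL (Wof q) ab.1) (enumL (Wof q) ab.2) = some 1) :=
    congrArg (fun t : TypeData => t.2.2.2.2.2.1) h
  have hD : (((Finset.range (Wof p).card) ×ˢ (Finset.range (Wof p).card).powerset).filter
        (fun aS : ℕ × Finset ℕ => p.d (enumL (Wof p) aS.1) (aS.2.image (enumL (Wof p))) ≠ none)).image
        (fun aS : ℕ × Finset ℕ => (aS.1, aS.2, (p.d (enumL (Wof p) aS.1) (aS.2.image (enumL (Wof p)))).getD 0)) =
      (((Finset.range (Wof q).card) ×ˢ (Finset.range (Wof q).card).powerset).filter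
        (fun aS : ℕ × Finset ℕ => q.d (enumL (Wof q) aS.1) (aS.2.image (enumL (Wof q))) ≠ none)).image
        (fun aS : ℕ × Finset ℕ => (aS.1, aS.2, (q.d (enumL (Wof q) aS.1) (aS.2.image (enumL (Wof q)))).getD 0)) :=
    congrArg (fun t : TypeData => t.2.2.2.2.2.2) h
  have hWpu : p.u ⊆ Wof p := u_sub_Wof p
  have hWpF : p.F ⊆ Wof p := F_sub_Wof p
  have hWqu : q.u ⊆ Wof q := u_sub_Wof q
  have hWqF : q.F ⊆ Wof q := F_sub_Wof q
  set e : Ordinal → Ordinal :=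
    fun x => if x ∈ Wof p then enumL (Wof q) (posOf (Wof p) x) else x with hedef
  have he : ∀ x ∈ Wof p, e x = enumL (Wof q) (posOf (Wof p) x) := fun x hx => if_pos hx
  have hmono : ∀ x ∈ Wof p, ∀ y ∈ Wof p, x < y → e x < e y := by
    intro x hx y hy hxy
    rw [he x hx, he y hy]
    have hab : posOf (Wof p) x < posOf (Wof p) y := by
      by_contra hcon
      push_neg at hcon
      rcases lt_or_eq_of_le hcon with h' | h'
      · have h2 := enumL_lt h' (posOf_lt hx)
        rw [enumL_posOf hx, enumL_posOf hy] at h2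
        exact absurd hxy (not_lt.2 h2.le)
      · have h2 : enumL (Wof p) (posOf (Wof p) y) = enumL (Wof p) (posOf (Wof p) x) := by rw [h']
        rw [enumL_posOf hx, enumL_posOf hy] at h2
        exact absurd h2 (ne_of_gt hxy)
    exact enumL_lt hab (hk ▸ posOf_lt hy)
  have himg : ∀ t : Finset Ordinal, t ⊆ Wof p →
      t.image e = (posSet (Wof p) t).image (enumL (Wof q)) := by
    intro t ht
    rw [← image_posOf ht, Finset.image_image]
    exact Finset.image_congr (fun x hx => he x (ht hx))
  have himgu : p.u.image e = q.u := by rw [himg p.u hWpu, hA1, posSet_image hWqu]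
  have himgF : p.F.image e = q.F := by rw [himg p.F hWpF, hA2, posSet_image hWqF]
  have hfix : ∀ x ∈ u ∪ F, e x = x := by
    intro x hx
    rcases Finset.mem_union.1 hx with hxu | hxF
    · have hxp : x ∈ Wof p := hWpu (hup hxu)
      have hmem : posOf (Wof p) x ∈ posSet (Wof p) u :=
        mem_posSet.2 ⟨posOf_lt hxp, by rw [enumL_posOf hxp]; exact hxu⟩
      rw [he x hxp, ← enum_agree (hup.trans hWpu) (huq.trans hWqu) hA3 hmem, enumL_posOf hxp]
    · have hxp : x ∈ Wof p := hWpF (hFp hxF)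
      have hmem : posOf (Wof p) x ∈ posSet (Wof p) F :=
        mem_posSet.2 ⟨posOf_lt hxp, by rw [enumL_posOf hxp]; exact hxF⟩
      rw [he x hxp, ← enum_agree (hFp.trans hWpF) (hFq.trans hWqF) hA4 hmem, enumL_posOf hxp]
  have hccomm : ∀ x ∈ p.u, ∀ y ∈ p.u, q.c (e x) (e y) = p.c x y := by
    intro x hx y hy
    have hxp : x ∈ Wof p := hWpu hx
    have hyp : y ∈ Wof p := hWpu hy
    have hax : enumL (Wof p) (posOf (Wof p) x) = x := enumL_posOf hxp
    have hby : enumL (Wof p) (posOf (Wof p) y) = y := enumL_posOf hyp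
    have ha : posOf (Wof p) x < (Wof p).card := posOf_lt hxp
    have hb : posOf (Wof p) y < (Wof p).card := posOf_lt hyp
    have haq : enumL (Wof q) (posOf (Wof p) x) ∈ q.u := by
      have h2 : posOf (Wof p) x ∈ posSet (Wof q) q.u :=
        hA1 ▸ mem_posSet.2 ⟨ha, by rw [hax]; exact hx⟩
      exact (mem_posSet.1 h2).2
    have hbq : enumL (Wof q) (posOf (Wof p) y) ∈ q.u := by
      have h2 : posOf (Wof p) y ∈ posSet (Wof q) q.u :=
        hA1 ▸ mem_posSet.2 ⟨hb, by rw [hby]; exact hy⟩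
      exact (mem_posSet.1 h2).2
    rw [he x hxp, he y hyp]
    rcases opt2cases (p.c x y) with hv | hv | hv
    · have hxy : x = y := by
        by_contra hne
        exact ((p.c_dom x y).2 ⟨hx, hy, hne⟩) hv
      have hab : posOf (Wof p) x = posOf (Wof p) y := by rw [hxy]
      rw [hv, hab]
      by_contra h'
      exact ((q.c_dom _ _).1 h').2.2 rfl
    · have hne : p.c x y ≠ none := by rw [hv]; exact Option.some_ne_none _
      obtain ⟨-, -, hxy⟩ := (p.c_dom x y).1 hne
      have hab : posOf (Wof p) x ≠ posOf (Wof p) y := fun hh => hxy (by rw [← hax, ← hby, hh])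
      have hq1 : enumL (Wof q) (posOf (Wof p) x) ≠ enumL (Wof q) (posOf (Wof p) y) :=
        fun hh => hab (enumL_injOn (hk ▸ ha) (hk ▸ hb) hh)
      have hqne : q.c (enumL (Wof q) (posOf (Wof p) x)) (enumL (Wof q) (posOf (Wof p) y)) ≠ none :=
        (q.c_dom _ _).2 ⟨haq, hbq, hq1⟩
      have hqn1 : q.c (enumL (Wof q) (posOf (Wof p) x)) (enumL (Wof q) (posOf (Wof p) y)) ≠ some 1 := by
        intro hcon
        have hmem : (posOf (Wof p) x, posOf (Wof p) y) ∈
            ((Finset.range (Wof q).card) ×ˢ (Finset.range (Wof q).card)).filter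
              (fun ab : ℕ × ℕ => q.c (enumL (Wof q) ab.1) (enumL (Wof q) ab.2) = some 1) :=
          Finset.mem_filter.2 ⟨Finset.mem_product.2
            ⟨Finset.mem_range.2 (hk ▸ ha), Finset.mem_range.2 (hk ▸ hb)⟩, hcon⟩
        rw [← hC] at hmem
        have h2 := (Finset.mem_filter.1 hmem).2
        simp only [hax, hby] at h2
        rw [hv] at h2
        exact (by decide : ((some 0 : Option (Fin 2)) = some 1) → False) h2
      rcases opt2cases (q.c (enumL (Wof q) (posOf (Wof p) x)) (enumL (Wof q) (posOf (Wof p) y)))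
        with h' | h' | h'
      · exact absurd h' hqne
      · rw [h', hv]
      · exact absurd h' hqn1
    · have hmem : (posOf (Wof p) x, posOf (Wof p) y) ∈
          ((Finset.range (Wof p).card) ×ˢ (Finset.range (Wof p).card)).filter
            (fun ab : ℕ × ℕ => p.c (enumL (Wof p) ab.1) (enumL (Wof p) ab.2) = some 1) :=
        Finset.mem_filter.2 ⟨Finset.mem_product.2
          ⟨Finset.mem_range.2 ha, Finset.mem_range.2 hb⟩, by simp only [hax, hby]; exact hv⟩
      rw [hC] at hmem
      have h2 := (Finset.mem_filter.1 hmem).2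
      rw [hv]
      exact h2
  have hdcomm : ∀ α ∈ p.F, ∀ s : Finset Ordinal, s ⊆ p.u →
      q.d (e α) (s.image e) = p.d α s := by
    intro α hα s hs
    have hαp : α ∈ Wof p := hWpF hα
    have haα : enumL (Wof p) (posOf (Wof p) α) = α := enumL_posOf hαp
    have ha : posOf (Wof p) α < (Wof p).card := posOf_lt hαp
    set S := s.image (posOf (Wof p)) with hSdef
    have hSsub : S ⊆ Finset.range (Wof p).card := by
      intro b hb
      obtain ⟨x, hx, rfl⟩ := Finset.mem_image.1 hb
      exact Finset.mem_range.2 (posOf_lt (hWpu (hs hx)))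
    have hSp : S.image (enumL (Wof p)) = s := by
      rw [hSdef, Finset.image_image]
      have h2 : s.image (enumL (Wof p) ∘ posOf (Wof p)) = s.image id :=
        Finset.image_congr (fun x hx => enumL_posOf (hWpu (hs hx)))
      rwa [Finset.image_id] at h2
    have hse : s.image e = S.image (enumL (Wof q)) := by
      rw [hSdef, Finset.image_image]
      exact Finset.image_congr (fun x hx => he x (hWpu (hs hx)))
    rw [he α hαp, hse]
    rcases Classical.em (p.d α s = none) with hv | hv
    · rw [hv]
      by_contra h'
      have hmemq : (posOf (Wof p) α, S) ∈
          ((Finset.range (Wof q).card) ×ˢ (Finset.range (Wof q).card).powerset).filter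
            (fun aS : ℕ × Finset ℕ => q.d (enumL (Wof q) aS.1) (aS.2.image (enumL (Wof q))) ≠ none) :=
        Finset.mem_filter.2 ⟨Finset.mem_product.2
          ⟨Finset.mem_range.2 (hk ▸ ha), Finset.mem_powerset.2 (hk ▸ hSsub)⟩, h'⟩
      have himgq : (posOf (Wof p) α, S,
          (q.d (enumL (Wof q) (posOf (Wof p) α)) (S.image (enumL (Wof q)))).getD 0) ∈
          (((Finset.range (Wof q).card) ×ˢ (Finset.range (Wof q).card).powerset).filter
            (fun aS : ℕ × Finset ℕ => q.d (enumL (Wof q) aS.1) (aS.2.image (enumL (Wof q))) ≠ none)).image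
            (fun aS : ℕ × Finset ℕ => (aS.1, aS.2, (q.d (enumL (Wof q) aS.1) (aS.2.image (enumL (Wof q)))).getD 0)) :=
        Finset.mem_image.2 ⟨_, hmemq, rfl⟩
      rw [← hD] at himgq
      obtain ⟨⟨a', S'⟩, hmem', heq'⟩ := Finset.mem_image.1 himgq
      have ha' : a' = posOf (Wof p) α := congrArg Prod.fst heq'
      have hS' : S' = S := congrArg (fun z : ℕ × Finset ℕ × ℕ => z.2.1) heq'
      subst ha'; subst hS'
      have hne'' := (Finset.mem_filter.1 hmem').2
      simp only [haα, hSp] at hne''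
      exact hne'' hv
    · set m := (p.d α s).getD 0 with hmdef
      have hm : p.d α s = some m := some_getD hv 0
      have hmem : (posOf (Wof p) α, S) ∈
          ((Finset.range (Wof p).card) ×ˢ (Finset.range (Wof p).card).powerset).filter
            (fun aS : ℕ × Finset ℕ => p.d (enumL (Wof p) aS.1) (aS.2.image (enumL (Wof p))) ≠ none) :=
        Finset.mem_filter.2 ⟨Finset.mem_product.2
          ⟨Finset.mem_range.2 ha, Finset.mem_powerset.2 hSsub⟩, by
            simp only [haα, hSp]; exact hv⟩
      have himgp : (posOf (Wof p) α, S, m) ∈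
          (((Finset.range (Wof p).card) ×ˢ (Finset.range (Wof p).card).powerset).filter
            (fun aS : ℕ × Finset ℕ => p.d (enumL (Wof p) aS.1) (aS.2.image (enumL (Wof p))) ≠ none)).image
            (fun aS : ℕ × Finset ℕ => (aS.1, aS.2, (p.d (enumL (Wof p) aS.1) (aS.2.image (enumL (Wof p)))).getD 0)) :=
        Finset.mem_image.2 ⟨(posOf (Wof p) α, S), hmem, by
          simp only [haα, hSp]; rfl⟩
      rw [hD] at himgp
      obtain ⟨⟨a', S'⟩, hmem', heq'⟩ := Finset.mem_image.1 himgp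
      have ha' : a' = posOf (Wof p) α := congrArg Prod.fst heq'
      have hS' : S' = S := congrArg (fun z : ℕ × Finset ℕ × ℕ => z.2.1) heq'
      have hm' : (q.d (enumL (Wof q) a') (S'.image (enumL (Wof q)))).getD 0 = m :=
        congrArg (fun z : ℕ × Finset ℕ × ℕ => z.2.2) heq'
      subst ha'; subst hS'
      have hne' := (Finset.mem_filter.1 hmem').2
      rw [hm, some_getD hne' 0, hm']
  exact ⟨hup, hFp, huq, hFq, e, hmono, himgu, himgF, hfix, hccomm, hdcomm⟩

/-! ### Amalgamation -/

variable {n : ℕ}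

def UAm (p : Fin n → PCal lam) : Finset Ordinal := Finset.univ.biUnion fun i => (p i).u

def FAm (p : Fin n → PCal lam) : Finset Ordinal := Finset.univ.biUnion fun i => (p i).F

def NAm (p : Fin n → PCal lam) : ℕ :=
  (Finset.univ.sup fun i =>
    ((p i).F.sup fun α => ((p i).u.powerset.sup fun s => ((p i).d α s).getD 0))) + 1

def TAm (p : Fin n → PCal lam) : Finset (Ordinal × Finset Ordinal) := FAm p ×ˢ (UAm p).powerset

def idxAm (p : Fin n → PCal lam) (a : Ordinal × Finset Ordinal) : ℕ :=
  @List.idxOf _ instBEqOfDecidableEq a (TAm p).toList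

def cAm (p : Fin n → PCal lam) : Ordinal → Ordinal → Option (Fin 2) := fun x y =>
  if h : ∃ i, x ∈ (p i).u ∧ y ∈ (p i).u then (p h.choose).c x y
  else if x ∈ UAm p ∧ y ∈ UAm p ∧ x ≠ y then some 1 else none

def dAm (p : Fin n → PCal lam) : Ordinal → Finset Ordinal → Option ℕ := fun α s =>
  if h : ∃ i, α ∈ (p i).F ∧ ∀ x ∈ s, x ∈ (p i).u ∧ x < α then (p h.choose).d α s
  else if α ∈ FAm p ∧ ∀ x ∈ s, x ∈ UAm p ∧ x < α then
    some (NAm p + idxAm p (α, s)) else none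

lemma mem_UAm {p : Fin n → PCal lam} {x : Ordinal} : x ∈ UAm p ↔ ∃ i, x ∈ (p i).u := by
  simp [UAm]

lemma mem_FAm {p : Fin n → PCal lam} {x : Ordinal} : x ∈ FAm p ↔ ∃ i, x ∈ (p i).F := by
  simp [FAm]

section WD

variable {p : Fin n → PCal lam} {u F : Finset Ordinal}
  (hst : ∀ i j, SameTypeOver u F (p i) (p j))
  (hu : ∀ i j, i ≠ j → (p i).u ∩ (p j).u = u)
  (hF : ∀ i j, i ≠ j → (p i).F ∩ (p j).F = F)

include hst hu

lemma cWD {i j : Fin n} {x y : Ordinal} (hxi : x ∈ (p i).u) (hyi : y ∈ (p i).u)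
    (hxj : x ∈ (p j).u) (hyj : y ∈ (p j).u) : (p i).c x y = (p j).c x y := by
  rcases eq_or_ne i j with rfl | hij
  · rfl
  · have hxu : x ∈ u := by rw [← hu i j hij]; exact Finset.mem_inter.2 ⟨hxi, hxj⟩
    have hyu : y ∈ u := by rw [← hu i j hij]; exact Finset.mem_inter.2 ⟨hyi, hyj⟩
    obtain ⟨_, _, _, _, e, _, _, _, hfix, hcc, _⟩ := hst i j
    have h1 := hcc x hxi y hyi
    rw [hfix x (Finset.mem_union_left _ hxu), hfix y (Finset.mem_union_left _ hyu)] at h1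
    exact h1.symm

lemma cAm_eq (i : Fin n) {x y : Ordinal} (hx : x ∈ (p i).u) (hy : y ∈ (p i).u) :
    cAm p x y = (p i).c x y := by
  have hex : ∃ j, x ∈ (p j).u ∧ y ∈ (p j).u := ⟨i, hx, hy⟩
  rw [cAm, dif_pos hex]
  exact cWD hst hu hex.choose_spec.1 hex.choose_spec.2 hx hy

lemma homog_down (i : Fin n) {s : Finset Ordinal} (hsub : s ⊆ (p i).u)
    (h : Homog (cAm p) s) : Homog ((p i).c) s := fun x hx y hy hxy => by
  rw [← cAm_eq hst hu i (hsub hx) (hsub hy)]; exact h x hx y hy hxy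

lemma homog_up (i : Fin n) {s : Finset Ordinal} (hsub : s ⊆ (p i).u)
    (h : Homog ((p i).c) s) : Homog (cAm p) s := fun x hx y hy hxy => by
  rw [cAm_eq hst hu i (hsub hx) (hsub hy)]; exact h x hx y hy hxy

lemma cAm_symm (x y : Ordinal) : cAm p x y = cAm p y x := by
  by_cases hex : ∃ i, x ∈ (p i).u ∧ y ∈ (p i).u
  · have hex' : ∃ i, y ∈ (p i).u ∧ x ∈ (p i).u := ⟨hex.choose, hex.choose_spec.2, hex.choose_spec.1⟩
    rw [cAm, cAm, dif_pos hex, dif_pos hex']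
    rw [cWD hst hu hex.choose_spec.1 hex.choose_spec.2 hex'.choose_spec.2 hex'.choose_spec.1]
    exact (p hex'.choose).c_symm x y
  · have hex' : ¬ ∃ i, y ∈ (p i).u ∧ x ∈ (p i).u := fun ⟨i, h1, h2⟩ => hex ⟨i, h2, h1⟩
    rw [cAm, cAm, dif_neg hex, dif_neg hex']
    by_cases hc : x ∈ UAm p ∧ y ∈ UAm p ∧ x ≠ y
    · rw [if_pos hc, if_pos ⟨hc.2.1, hc.1, hc.2.2.symm⟩]
    · have hc' : ¬ (y ∈ UAm p ∧ x ∈ UAm p ∧ y ≠ x) := fun ⟨h1, h2, h3⟩ => hc ⟨h2, h1, h3.symm⟩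
      rw [if_neg hc, if_neg hc']

lemma cAm_default {x y : Ordinal} (hnex : ¬ ∃ i, x ∈ (p i).u ∧ y ∈ (p i).u)
    (hx : x ∈ UAm p) (hy : y ∈ UAm p) (hxy : x ≠ y) : cAm p x y = some 1 := by
  rw [cAm, dif_neg hnex, if_pos ⟨hx, hy, hxy⟩]

omit hst hu in
lemma cAm_dom (x y : Ordinal) : cAm p x y ≠ none ↔ (x ∈ UAm p ∧ y ∈ UAm p ∧ x ≠ y) := by
  by_cases hex : ∃ i, x ∈ (p i).u ∧ y ∈ (p i).u
  · rw [cAm, dif_pos hex]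
    rw [(p hex.choose).c_dom x y]
    constructor
    · rintro ⟨h1, h2, h3⟩
      exact ⟨mem_UAm.2 ⟨_, h1⟩, mem_UAm.2 ⟨_, h2⟩, h3⟩
    · rintro ⟨-, -, h3⟩
      exact ⟨hex.choose_spec.1, hex.choose_spec.2, h3⟩
  · rw [cAm, dif_neg hex]
    by_cases hc : x ∈ UAm p ∧ y ∈ UAm p ∧ x ≠ y
    · rw [if_pos hc]
      exact iff_of_true (Option.some_ne_none _) hc
    · rw [if_neg hc]
      exact iff_of_false (fun hh => hh rfl) hc

include hF in
lemma dWD {i j : Fin n} {α : Ordinal} {s : Finset Ordinal}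
    (hαi : α ∈ (p i).F) (hsi : ∀ x ∈ s, x ∈ (p i).u ∧ x < α)
    (hαj : α ∈ (p j).F) (hsj : ∀ x ∈ s, x ∈ (p j).u ∧ x < α) :
    (p i).d α s = (p j).d α s := by
  rcases eq_or_ne i j with rfl | hij
  · rfl
  · have hαF : α ∈ F := by rw [← hF i j hij]; exact Finset.mem_inter.2 ⟨hαi, hαj⟩
    have hsu : ∀ x ∈ s, x ∈ u := fun x hx => by
      rw [← hu i j hij]; exact Finset.mem_inter.2 ⟨(hsi x hx).1, (hsj x hx).1⟩
    obtain ⟨_, _, _, _, e, _, _, _, hfix, _, hdd⟩ := hst i j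
    have h1 := hdd α hαi s (fun x hx => (hsi x hx).1)
    rw [hfix α (Finset.mem_union_right _ hαF)] at h1
    have hims : s.image e = s := by
      have h2 : s.image e = s.image id :=
        Finset.image_congr (fun x hx => hfix x (Finset.mem_union_left _ (hsu x hx)))
      rwa [Finset.image_id] at h2
    rw [hims] at h1
    exact h1.symm

include hF in
lemma dAm_eq (i : Fin n) {α : Ordinal} {s : Finset Ordinal}
    (hα : α ∈ (p i).F) (hs : ∀ x ∈ s, x ∈ (p i).u ∧ x < α) :
    dAm p α s = (p i).d α s := by
  have hex : ∃ j, α ∈ (p j).F ∧ ∀ x ∈ s, x ∈ (p j).u ∧ x < α := ⟨i, hα, hs⟩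
  rw [dAm, dif_pos hex]
  exact dWD hst hu hF hex.choose_spec.1 hex.choose_spec.2 hα hs

end WD

lemma dAm_new {p : Fin n → PCal lam} {α : Ordinal} {s : Finset Ordinal}
    (hnex : ¬ ∃ i, α ∈ (p i).F ∧ ∀ x ∈ s, x ∈ (p i).u ∧ x < α)
    (hc : α ∈ FAm p ∧ ∀ x ∈ s, x ∈ UAm p ∧ x < α) :
    dAm p α s = some (NAm p + idxAm p (α, s)) := by
  rw [dAm, dif_neg hnex, if_pos hc]

lemma dAm_dom {p : Fin n → PCal lam} (α : Ordinal) (s : Finset Ordinal) :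
    dAm p α s ≠ none ↔ (α ∈ FAm p ∧ ∀ x ∈ s, x ∈ UAm p ∧ x < α) := by
  by_cases hex : ∃ i, α ∈ (p i).F ∧ ∀ x ∈ s, x ∈ (p i).u ∧ x < α
  · rw [dAm, dif_pos hex]
    rw [(p hex.choose).d_dom α s]
    obtain ⟨h1, h2⟩ := hex.choose_spec
    constructor
    · rintro ⟨h3, h4⟩
      exact ⟨mem_FAm.2 ⟨_, h3⟩, fun x hx => ⟨mem_UAm.2 ⟨_, (h4 x hx).1⟩, (h4 x hx).2⟩⟩
    · intro _
      exact ⟨h1, h2⟩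
  · rw [dAm, dif_neg hex]
    by_cases hc : α ∈ FAm p ∧ ∀ x ∈ s, x ∈ UAm p ∧ x < α
    · rw [if_pos hc]
      exact iff_of_true (Option.some_ne_none _) hc
    · rw [if_neg hc]
      exact iff_of_false (fun hh => hh rfl) hc

lemma NAm_gt {p : Fin n → PCal lam} {i : Fin n} {α : Ordinal} {s : Finset Ordinal}
    (h : (p i).d α s ≠ none) : ((p i).d α s).getD 0 < NAm p := by
  obtain ⟨hα, hs⟩ := ((p i).d_dom α s).1 h
  have h1 : ((p i).d α s).getD 0 ≤
      (p i).u.powerset.sup fun t => ((p i).d α t).getD 0 :=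
    Finset.le_sup (f := fun t => ((p i).d α t).getD 0) (Finset.mem_powerset.2 (fun x hx => (hs x hx).1))
  have h2 : ((p i).u.powerset.sup fun t => ((p i).d α t).getD 0) ≤
      (p i).F.sup fun β => ((p i).u.powerset.sup fun t => ((p i).d β t).getD 0) :=
    Finset.le_sup (f := fun β => ((p i).u.powerset.sup fun t => ((p i).d β t).getD 0)) hα
  have h3 : ((p i).F.sup fun β => ((p i).u.powerset.sup fun t => ((p i).d β t).getD 0)) ≤
      Finset.univ.sup fun j =>
        ((p j).F.sup fun β => ((p j).u.powerset.sup fun t => ((p j).d β t).getD 0)) :=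
    Finset.le_sup (f := fun j => ((p j).F.sup fun β => ((p j).u.powerset.sup fun t => ((p j).d β t).getD 0))) (Finset.mem_univ i)
  exact Nat.lt_succ_of_le (h1.trans (h2.trans h3))

lemma amalg {u F : Finset Ordinal} (p : Fin n → PCal lam)
    (hst : ∀ i j, SameTypeOver u F (p i) (p j))
    (hu : ∀ i j, i ≠ j → (p i).u ∩ (p j).u = u)
    (hF : ∀ i j, i ≠ j → (p i).F ∩ (p j).F = F) :
    ∃ q : PCal lam, ∀ i, pcLe q (p i) := by
  refine ⟨⟨UAm p, FAm p, ?_, ?_, cAm p, dAm p, cAm_dom, cAm_symm hst hu, dAm_dom, ?_⟩, ?_⟩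
  · intro x hx
    obtain ⟨i, hi⟩ := mem_UAm.1 hx
    exact (p i).hu x hi
  · intro x hx
    obtain ⟨i, hi⟩ := mem_FAm.1 hx
    exact (p i).hF x hi
  · intro α hα s₁ s₂ hs₁ hs₂ hh₁ hh₂ hd
    by_cases h1 : ∃ i, α ∈ (p i).F ∧ ∀ x ∈ s₁, x ∈ (p i).u ∧ x < α
    · by_cases h2 : ∃ j, α ∈ (p j).F ∧ ∀ x ∈ s₂, x ∈ (p j).u ∧ x < α
      · obtain ⟨i, hαi, hsi⟩ := h1
        obtain ⟨j, hαj, hsj⟩ := h2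
        rw [dAm_eq hst hu hF i hαi hsi, dAm_eq hst hu hF j hαj hsj] at hd
        rcases eq_or_ne i j with rfl | hij
        · have hstar := (p i).star α hαi s₁ s₂ hsi hsj
            (homog_down hst hu i (fun x hx => (hsi x hx).1) hh₁)
            (homog_down hst hu i (fun x hx => (hsj x hx).1) hh₂) hd
          refine homog_up hst hu i (fun x hx => ?_) hstar
          rcases Finset.mem_union.1 hx with h | h
          exacts [(hsi x h).1, (hsj x h).1]
        · have hαF : α ∈ F := by rw [← hF i j hij]; exact Finset.mem_inter.2 ⟨hαi, hαj⟩
          obtain ⟨hupj, hFpj, hupi, hFpi, e, hmono, himgu, himgF, hfix, hcc, hdd⟩ := hst j i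
          have heα : e α = α := hfix α (Finset.mem_union_right _ hαF)
          have hinj : ∀ x ∈ (p j).u ∪ (p j).F, ∀ y ∈ (p j).u ∪ (p j).F, e x = e y → x = y := by
            intro x hx y hy hxy
            rcases lt_trichotomy x y with h' | h' | h'
            · exact absurd hxy (ne_of_lt (hmono x hx y hy h'))
            · exact h'
            · exact absurd hxy.symm (ne_of_lt (hmono y hy x hx h'))
          have hs₂'sub : s₂.image e ⊆ (p i).u := by
            rw [← himgu]
            exact Finset.image_subset_image (fun x hx => (hsj x hx).1)
          have hs₂'cond : ∀ y ∈ s₂.image e, y ∈ (p i).u ∧ y < α := by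
            intro y hy
            obtain ⟨x, hx, rfl⟩ := Finset.mem_image.1 hy
            refine ⟨hs₂'sub hy, ?_⟩
            have h3 := hmono x (Finset.mem_union_left _ (hsj x hx).1) α
              (Finset.mem_union_right _ (hFpj hαF)) (hsj x hx).2
            rwa [heα] at h3
          have hh₂j : Homog (p j).c s₂ := homog_down hst hu j (fun x hx => (hsj x hx).1) hh₂
          have hh₂' : Homog (p i).c (s₂.image e) := by
            intro a ha b hb hab
            obtain ⟨x, hx, rfl⟩ := Finset.mem_image.1 ha
            obtain ⟨y, hy, rfl⟩ := Finset.mem_image.1 hb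
            have hxy : x ≠ y := fun hh => hab (by rw [hh])
            rw [hcc x (hsj x hx).1 y (hsj y hy).1]
            exact hh₂j x hx y hy hxy
          have hd₂' : (p i).d α (s₂.image e) = (p j).d α s₂ := by
            have h3 := hdd α hαj s₂ (fun x hx => (hsj x hx).1)
            rwa [heα] at h3
          have hstar := (p i).star α hαi s₁ (s₂.image e) hsi hs₂'cond
            (homog_down hst hu i (fun x hx => (hsi x hx).1) hh₁) hh₂'
            (by rw [hd₂']; exact hd)
          have hcross : ∀ x ∈ s₁, ∀ y ∈ s₂, x ≠ y → cAm p x y = some 1 := by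
            intro x hx y hy hxy
            by_cases hyu : y ∈ u
            · have hey : e y = y := hfix y (Finset.mem_union_left _ hyu)
              have hys2' : y ∈ s₂.image e := by
                rw [← hey]; exact Finset.mem_image_of_mem e hy
              have h4 := hstar x (Finset.mem_union_left _ hx) y
                (Finset.mem_union_right _ hys2') hxy
              rw [cAm_eq hst hu i (hsi x hx).1 (hupi hyu)]
              exact h4
            · by_cases hxu : x ∈ u
              · have hex : e x = x := hfix x (Finset.mem_union_left _ hxu)
                have hxj' : x ∈ (p j).u := hupj hxu
                have hyj' : y ∈ (p j).u := (hsj y hy).1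
                have hcc' := hcc x hxj' y hyj'
                have hney : x ≠ e y := by
                  intro hcon
                  apply hxy
                  exact hinj x (Finset.mem_union_left _ hxj') y (Finset.mem_union_left _ hyj')
                    (by rw [hex, ← hcon])
                have h4 := hstar x (Finset.mem_union_left _ hx) (e y)
                  (Finset.mem_union_right _ (Finset.mem_image_of_mem e hy)) hney
                rw [cAm_eq hst hu j hxj' hyj', ← hcc', hex]
                exact h4
              · have hnex : ¬ ∃ l, x ∈ (p l).u ∧ y ∈ (p l).u := by
                  rintro ⟨l, hxl, hyl⟩
                  rcases eq_or_ne l i with rfl | hli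
                  · exact hyu (by rw [← hu l j hij]; exact Finset.mem_inter.2 ⟨hyl, (hsj y hy).1⟩)
                  · exact hxu (by rw [← hu l i hli]; exact Finset.mem_inter.2 ⟨hxl, (hsi x hx).1⟩)
                exact cAm_default hst hu hnex (mem_UAm.2 ⟨i, (hsi x hx).1⟩)
                  (mem_UAm.2 ⟨j, (hsj y hy).1⟩) hxy
          intro x hx y hy hxy
          rcases Finset.mem_union.1 hx with hx1 | hx2 <;>
            rcases Finset.mem_union.1 hy with hy1 | hy2
          · exact hh₁ x hx1 y hy1 hxy
          · exact hcross x hx1 y hy2 hxy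
          · rw [cAm_symm hst hu x y]
            exact hcross y hy1 x hx2 hxy.symm
          · exact hh₂ x hx2 y hy2 hxy
      · obtain ⟨i, hαi, hsi⟩ := h1
        rw [dAm_eq hst hu hF i hαi hsi, dAm_new h2 ⟨hα, hs₂⟩] at hd
        have hne : (p i).d α s₁ ≠ none := ((p i).d_dom α s₁).2 ⟨hαi, hsi⟩
        rw [some_getD hne 0] at hd
        have h5 := Option.some.inj hd
        have h6 := NAm_gt (i := i) hne
        omega
    · by_cases h2 : ∃ j, α ∈ (p j).F ∧ ∀ x ∈ s₂, x ∈ (p j).u ∧ x < α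
      · obtain ⟨j, hαj, hsj⟩ := h2
        rw [dAm_new h1 ⟨hα, hs₁⟩, dAm_eq hst hu hF j hαj hsj] at hd
        have hne : (p j).d α s₂ ≠ none := ((p j).d_dom α s₂).2 ⟨hαj, hsj⟩
        rw [some_getD hne 0] at hd
        have h5 := Option.some.inj hd
        have h6 := NAm_gt (i := j) hne
        omega
      · rw [dAm_new h1 ⟨hα, hs₁⟩, dAm_new h2 ⟨hα, hs₂⟩] at hd
        have h5 := Option.some.inj hd
        have hm1 : (α, s₁) ∈ (TAm p).toList :=
          Finset.mem_toList.2 (show (α, s₁) ∈ FAm p ×ˢ (UAm p).powerset from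
            Finset.mem_product.2 ⟨hα, Finset.mem_powerset.2 (fun x hx => (hs₁ x hx).1)⟩)
        have hm2 : (α, s₂) ∈ (TAm p).toList :=
          Finset.mem_toList.2 (show (α, s₂) ∈ FAm p ×ˢ (UAm p).powerset from
            Finset.mem_product.2 ⟨hα, Finset.mem_powerset.2 (fun x hx => (hs₂ x hx).1)⟩)
        have h8 : idxAm p (α, s₁) = idxAm p (α, s₂) := by omega
        have h6 : (α, s₁) = ((α, s₂) : Ordinal × Finset Ordinal) :=
          (@List.idxOf_inj _ instBEqOfDecidableEq _ _ _ _ hm1).1 h8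
        have h7 : s₁ = s₂ := congrArg Prod.snd h6
        subst h7
        rwa [Finset.union_self]
  · intro i
    refine ⟨Finset.subset_biUnion_of_mem (fun j => (p j).u) (Finset.mem_univ i),
      Finset.subset_biUnion_of_mem (fun j => (p j).F) (Finset.mem_univ i), ?_, ?_⟩
    · intro x y hne
      obtain ⟨hx, hy, -⟩ := ((p i).c_dom x y).1 hne
      exact cAm_eq hst hu i hx hy
    · intro α s hne
      obtain ⟨hα, hs⟩ := ((p i).d_dom α s).1 hne
      exact dAm_eq hst hu hF i hα hs

/-! ### Cardinal tools -/

lemma lift_isRegular {mu : Cardinal.{0}} (h : mu.IsRegular) :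
    (Cardinal.lift.{1,0} mu).IsRegular := by
  constructor
  · rw [← Cardinal.lift_aleph0.{1,0}]
    exact Cardinal.lift_le.2 h.1
  · rw [← Cardinal.lift_ord, ← Ordinal.lift_cof]
    exact Cardinal.lift_le.2 h.2

lemma small_lt {μ : Cardinal.{1}} (hreg : μ.IsRegular) (h0 : ℵ₀ < μ) {ι : Type 1}
    {C : Type 1} [Countable C] (g : ι → C) (A : Set ι) (hA : #A = μ) :
    ∃ c : C, #{i : ι | i ∈ A ∧ g i = c} = μ := by
  by_contra hcon
  push_neg at hcon
  have hlt : ∀ c : C, #{i : ι | i ∈ A ∧ g i = c} < μ := by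
    intro c
    refine lt_of_le_of_ne ?_ (hcon c)
    rw [← hA]
    exact Cardinal.mk_le_mk_of_subset (fun i hi => hi.1)
  have hcover : A ⊆ ⋃ c : C, {i : ι | i ∈ A ∧ g i = c} :=
    fun i hi => Set.mem_iUnion.2 ⟨g i, hi, rfl⟩
  have h1 : #A ≤ #(⋃ c : C, {i : ι | i ∈ A ∧ g i = c}) := Cardinal.mk_le_mk_of_subset hcover
  have h2 := Cardinal.mk_iUnion_le (fun c : C => {i : ι | i ∈ A ∧ g i = c})
  have h3 : #C ≤ ℵ₀ := Cardinal.mk_le_aleph0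
  have h4 : iSup (fun c : C => #{i : ι | i ∈ A ∧ g i = c}) < μ :=
    Cardinal.iSup_lt_of_isRegular hreg (lt_of_le_of_lt h3 h0) hlt
  have h5 : #C * iSup (fun c : C => #{i : ι | i ∈ A ∧ g i = c}) < μ :=
    Cardinal.mul_lt_of_lt hreg.1 (lt_of_le_of_lt h3 h0) h4
  rw [hA] at h1
  exact absurd (h1.trans h2) (not_le.2 h5)

lemma mk_biUnion_lt {μ : Cardinal.{1}} (hreg : μ.IsRegular) {ι κ : Type 1}
    (S : Set κ) (hS : #S < μ) (f : κ → Set ι) (hf : ∀ c ∈ S, #(f c) < μ) :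
    #(⋃ c ∈ S, f c) < μ := by
  have h2 : #(⋃ c : S, f c) ≤ #S * iSup (fun c : S => #(f c)) :=
    Cardinal.mk_iUnion_le _
  have h4 : iSup (fun c : S => #(f c)) < μ :=
    Cardinal.iSup_lt_of_isRegular hreg hS (fun c => hf c c.2)
  have h5 : #S * iSup (fun c : S => #(f c)) < μ := Cardinal.mul_lt_of_lt hreg.1 hS h4
  have h6 : #(⋃ c ∈ S, f c) = #(⋃ c : S, f c) := by rw [Set.biUnion_eq_iUnion]
  rw [h6]
  exact h2.trans_lt h5

/-! ### Delta system lemma -/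

lemma delta_system_card {μ : Cardinal.{1}} (hreg : μ.IsRegular) (h0 : ℵ₀ < μ) {ι : Type 1}
    (n : ℕ) :
    ∀ (f : ι → Finset Ordinal.{0}) (A : Set ι), #A = μ → (∀ i ∈ A, (f i).card = n) →
    ∃ B ⊆ A, ∃ r : Finset Ordinal.{0}, #B = μ ∧ (∀ i ∈ B, r ⊆ f i) ∧
      (∀ i ∈ B, ∀ j ∈ B, i ≠ j → f i ∩ f j = r) := by
  induction n with
  | zero =>
    intro f A hA hcard
    refine ⟨A, subset_rfl, ∅, hA, fun i hi => by
      rw [Finset.card_eq_zero.1 (hcard i hi)], ?_⟩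
    intro i hi j hj hij
    rw [Finset.card_eq_zero.1 (hcard i hi), Finset.empty_inter]
  | succ n ih =>
    intro f A hA hcard
    by_cases hx : ∃ x : Ordinal.{0}, μ ≤ #{i : ι | i ∈ A ∧ x ∈ f i}
    · obtain ⟨x, hxbig⟩ := hx
      have hA' : #{i : ι | i ∈ A ∧ x ∈ f i} = μ :=
        le_antisymm (hA ▸ Cardinal.mk_le_mk_of_subset (fun i hi => hi.1)) hxbig
      obtain ⟨B, hBA', r', hB, hr'sub, hr'⟩ := ih (fun i => (f i).erase x) _ hA'
        (fun i hi => by rw [Finset.card_erase_of_mem hi.2, hcard i hi.1]; rfl)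
      refine ⟨B, fun i hi => (hBA' hi).1, insert x r', hB, ?_, ?_⟩
      · intro i hi
        exact Finset.insert_subset_iff.2 ⟨(hBA' hi).2,
          (hr'sub i hi).trans (Finset.erase_subset x (f i))⟩
      · intro i hi j hj hij
        ext y
        constructor
        · intro hy
          obtain ⟨hyi, hyj⟩ := Finset.mem_inter.1 hy
          by_cases hyx : y = x
          · subst hyx; exact Finset.mem_insert_self y _
          · have h7 : y ∈ (f i).erase x ∩ (f j).erase x :=
              Finset.mem_inter.2 ⟨Finset.mem_erase.2 ⟨hyx, hyi⟩, Finset.mem_erase.2 ⟨hyx, hyj⟩⟩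
            rw [hr' i hi j hj hij] at h7
            exact Finset.mem_insert_of_mem h7
        · intro hy
          rcases Finset.mem_insert.1 hy with rfl | hy'
          · exact Finset.mem_inter.2 ⟨(hBA' hi).2, (hBA' hj).2⟩
          · rw [← hr' i hi j hj hij] at hy'
            obtain ⟨h8, h9⟩ := Finset.mem_inter.1 hy'
            exact Finset.mem_inter.2 ⟨Finset.erase_subset _ _ h8, Finset.erase_subset _ _ h9⟩
    · push_neg at hx
      have hchainub : ∀ c ⊆ {M : Set ι | M ⊆ A ∧ ∀ i ∈ M, ∀ j ∈ M, i ≠ j → f i ∩ f j = ∅},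
          IsChain (· ⊆ ·) c → c.Nonempty →
          ∃ ub ∈ {M : Set ι | M ⊆ A ∧ ∀ i ∈ M, ∀ j ∈ M, i ≠ j → f i ∩ f j = ∅},
            ∀ s ∈ c, s ⊆ ub := by
        intro c hc hchain _
        refine ⟨⋃₀ c, ⟨?_, ?_⟩, fun s hs => Set.subset_sUnion_of_mem hs⟩
        · intro i hi
          obtain ⟨M, hMc, hiM⟩ := Set.mem_sUnion.1 hi
          exact (hc hMc).1 hiM
        · intro i hi j hj hij
          obtain ⟨M₁, hM₁c, hiM₁⟩ := Set.mem_sUnion.1 hi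
          obtain ⟨M₂, hM₂c, hjM₂⟩ := Set.mem_sUnion.1 hj
          rcases eq_or_ne M₁ M₂ with rfl | hMne
          · exact (hc hM₁c).2 i hiM₁ j hjM₂ hij
          · rcases hchain hM₁c hM₂c hMne with h' | h'
            · exact (hc hM₂c).2 i (h' hiM₁) j hjM₂ hij
            · exact (hc hM₁c).2 i hiM₁ j (h' hjM₂) hij
      obtain ⟨M, -, hMmax⟩ := zorn_subset_nonempty _ hchainub ∅
        ⟨Set.empty_subset A, fun i hi => absurd hi (Set.notMem_empty i)⟩
      by_cases hMbig : μ ≤ #M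
      · refine ⟨M, hMmax.prop.1, ∅, le_antisymm ?_ hMbig, fun i _ => Finset.empty_subset _,
          fun i hi j hj hij => hMmax.prop.2 i hi j hj hij⟩
        rw [← hA]
        exact Cardinal.mk_le_mk_of_subset hMmax.prop.1
      · exfalso
        push_neg at hMbig
        have hU := mk_biUnion_lt hreg M hMbig (fun i => ((f i : Finset Ordinal.{0}) : Set Ordinal.{0}))
            (fun i _ => lt_trans (f i).finite_toSet.lt_aleph0 h0)
        have hBad := mk_biUnion_lt hreg _ hU (fun x => {i : ι | i ∈ A ∧ x ∈ f i})
            (fun x _ => hx x)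
        have hAB : ¬ A ⊆ (⋃ x ∈ (⋃ i ∈ M, ((f i : Finset Ordinal.{0}) : Set Ordinal.{0})), {i : ι | i ∈ A ∧ x ∈ f i}) := by
          intro hsub
          exact absurd (hA ▸ Cardinal.mk_le_mk_of_subset hsub) (not_le.2 hBad)
        obtain ⟨j0, hj0A, hj0B⟩ := Set.not_subset.1 hAB
        have hj0M : j0 ∉ M := by
          intro hj0M
          apply hj0B
          have hne : (f j0).Nonempty := Finset.card_pos.1 (by rw [hcard j0 hj0A]; omega)
          obtain ⟨y, hy⟩ := hne
          exact Set.mem_biUnion (Set.mem_biUnion hj0M hy) ⟨hj0A, hy⟩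
        have hdisj : ∀ i ∈ M, f i ∩ f j0 = ∅ := by
          intro i hiM
          rw [Finset.eq_empty_iff_forall_notMem]
          intro y hy
          obtain ⟨hyi, hyj⟩ := Finset.mem_inter.1 hy
          exact hj0B (Set.mem_biUnion (Set.mem_biUnion hiM hyi) ⟨hj0A, hyj⟩)
        have hMem : insert j0 M ∈
            {M : Set ι | M ⊆ A ∧ ∀ i ∈ M, ∀ j ∈ M, i ≠ j → f i ∩ f j = ∅} := by
          refine ⟨Set.insert_subset_iff.2 ⟨hj0A, hMmax.prop.1⟩, ?_⟩
          intro i hi j hj hij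
          rcases Set.mem_insert_iff.1 hi with rfl | hiM
          · rcases Set.mem_insert_iff.1 hj with rfl | hjM
            · exact absurd rfl hij
            · rw [Finset.inter_comm]; exact hdisj j hjM
          · rcases Set.mem_insert_iff.1 hj with rfl | hjM
            · exact hdisj i hiM
            · exact hMmax.prop.2 i hiM j hjM hij
        exact hj0M (hMmax.2 hMem (Set.subset_insert j0 M) (Set.mem_insert j0 M))

lemma delta_system {μ : Cardinal.{1}} (hreg : μ.IsRegular) (h0 : ℵ₀ < μ) {ι : Type 1}
    (f : ι → Finset Ordinal.{0}) (A : Set ι) (hA : #A = μ) :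
    ∃ B ⊆ A, ∃ r : Finset Ordinal.{0}, #B = μ ∧ (∀ i ∈ B, r ⊆ f i) ∧
      (∀ i ∈ B, ∀ j ∈ B, i ≠ j → f i ∩ f j = r) := by
  obtain ⟨nl, hnl⟩ := small_lt hreg h0 (fun i => ULift.up.{1} ((f i).card)) A hA
  obtain ⟨B, hBsub, r, hB, h1, h2⟩ := delta_system_card hreg h0 nl.down f _ hnl
    (fun i hi => congrArg ULift.down hi.2)
  exact ⟨B, fun i hi => (hBsub hi).1, r, hB, h1, h2⟩

end Stmt11

end


/-- Amalgamation of finitely many conditions of the same type over their root,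
and consequently: `P_cal` has precaliber μ for every uncountable regular μ. -/
theorem stmt11 (lam : Cardinal) (hreg : lam.IsRegular)
    (hlam : Cardinal.aleph 1 < lam) :
    (∀ (n : ℕ) (p : Fin n → PCal lam) (u F : Finset Ordinal),
      (∀ i j, SameTypeOver u F (p i) (p j)) →
      (∀ i j, i ≠ j → (p i).u ∩ (p j).u = u) →
      (∀ i j, i ≠ j → (p i).F ∩ (p j).F = F) →
      ∃ q : PCal lam, ∀ i, pcLe q (p i)) ∧
    (∀ mu : Cardinal, mu.IsRegular → ℵ₀ < mu →
      ∀ A : Set (PCal lam), #A = Cardinal.lift.{1,0} mu →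
        ∃ B ⊆ A, #B = Cardinal.lift.{1,0} mu ∧
          ∀ s : Finset (PCal lam), ↑s ⊆ B → ∃ q, ∀ b ∈ s, pcLe q b) := by
  constructor
  · intro n p u F hst hu hF
    exact Stmt11.amalg p hst hu hF
  · intro mu hmu hmu0 A hA
    have hregm : (Cardinal.lift.{1,0} mu).IsRegular := Stmt11.lift_isRegular hmu
    have h0 : ℵ₀ < Cardinal.lift.{1,0} mu := by
      rw [← Cardinal.lift_aleph0.{1,0}]
      exact Cardinal.lift_lt.2 hmu0
    obtain ⟨B₁, hB₁A, u, hB₁, husub, huint⟩ :=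
      Stmt11.delta_system hregm h0 (fun p : PCal lam => p.u) A hA
    obtain ⟨B₂, hB₂B₁, F, hB₂, hFsub, hFint⟩ :=
      Stmt11.delta_system hregm h0 (fun p : PCal lam => p.F) B₁ hB₁
    obtain ⟨t, ht⟩ := Stmt11.small_lt hregm h0
      (fun q : PCal lam => ULift.up.{1} (Stmt11.invOf u F q)) B₂ hB₂
    refine ⟨{q : PCal lam | q ∈ B₂ ∧ ULift.up.{1} (Stmt11.invOf u F q) = t},
      fun q hq => hB₁A (hB₂B₁ hq.1), ht, ?_⟩
    intro s hs
    set pf : Fin s.card → PCal lam := fun i => (s.equivFin.symm i : PCal lam) with hpf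
    have hmem : ∀ i, pf i ∈ {q : PCal lam | q ∈ B₂ ∧ ULift.up.{1} (Stmt11.invOf u F q) = t} :=
      fun i => hs (s.equivFin.symm i).2
    have hmem2 : ∀ i, pf i ∈ B₂ := fun i => (hmem i).1
    have hmem1 : ∀ i, pf i ∈ B₁ := fun i => hB₂B₁ (hmem2 i)
    have hinj : Function.Injective pf := by
      intro i j hij
      exact s.equivFin.symm.injective (Subtype.ext hij)
    have hup : ∀ i j, i ≠ j → (pf i).u ∩ (pf j).u = u :=
      fun i j hij => huint _ (hmem1 i) _ (hmem1 j) (fun h => hij (hinj h))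
    have hFp : ∀ i j, i ≠ j → (pf i).F ∩ (pf j).F = F :=
      fun i j hij => hFint _ (hmem2 i) _ (hmem2 j) (fun h => hij (hinj h))
    have hSTO : ∀ i j, SameTypeOver u F (pf i) (pf j) := by
      intro i j
      refine Stmt11.sameType_of_inv (husub _ (hmem1 i)) (hFsub _ (hmem2 i))
        (husub _ (hmem1 j)) (hFsub _ (hmem2 j)) ?_
      exact congrArg ULift.down ((hmem i).2.trans ((hmem j).2).symm)
    obtain ⟨q, hq⟩ := Stmt11.amalg pf hSTO hup hFp
    refine ⟨q, fun b hb => ?_⟩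
    have h3 := hq (s.equivFin ⟨b, hb⟩)
    have h4 : pf (s.equivFin ⟨b, hb⟩) = b :=
      congrArg Subtype.val (s.equivFin.symm_apply_apply ⟨b, hb⟩)
    rwa [h4] at h3
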